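/- If for a set S of linear inequalities encoding k-colourability of a graph G and a fixed list of vertices u_1,…,u_ℓ, for every tuple of colours (c_1,…,c_ℓ) ∈ [k]^ℓ the system S ∪ {x_{u_1,c_1} = 1, …, x_{u_ℓ,c_ℓ} = 1} has a cutting planes refutation of length at most L, then S itself has a cutting planes refutation of length k^{O(ℓ)}·L. -/

import Mathlib

/-- A linear inequality `∑_v a v · x v ≤ b` over 0/1-valued variables
indexed by `ν`. -/
structure LinIneq (ν : Type) where
  a : ν → ℤ
  b : ℤ

/-- Cutting planes derivations from a set `S` of inequalities, together with
their length (number of derivation steps). -/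
inductive CP {ν : Type} [DecidableEq ν] (S : Set (LinIneq ν)) :
    LinIneq ν → ℕ → Prop where
  | hyp (I : LinIneq ν) : I ∈ S → CP S I 1
  | ax_le (v : ν) : CP S ⟨fun u => if u = v then 1 else 0, 1⟩ 1
  | ax_ge (v : ν) : CP S ⟨fun u => if u = v then -1 else 0, 0⟩ 1
  | add {I₁ I₂ : LinIneq ν} {L₁ L₂ : ℕ} : CP S I₁ L₁ → CP S I₂ L₂ →
      CP S ⟨fun v => I₁.a v + I₂.a v, I₁.b + I₂.b⟩ (L₁ + L₂ + 1)
  | mul (c : ℕ) {I : LinIneq ν} {L : ℕ} : CP S I L →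
      CP S ⟨fun v => (c : ℤ) * I.a v, (c : ℤ) * I.b⟩ (L + 1)
  | div (c : ℕ) (hc : 0 < c) {I : LinIneq ν} {L : ℕ}
      (hdvd : ∀ v, (c : ℤ) ∣ I.a v) : CP S I L →
      CP S ⟨fun v => I.a v / (c : ℤ), ⌊(I.b : ℚ) / (c : ℚ)⌋⟩ (L + 1)

/-- The linear inequalities encoding `k`-colourability of a graph `G`:
`∑_j x_{v,j} ≥ 1` for every vertex `v` (written `∑_j -x_{v,j} ≤ -1`),
`x_{v,j} + x_{v,j'} ≤ 1` for every vertex `v` and colours `j ≠ j'`, and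
`x_{u,j} + x_{v,j} ≤ 1` for every edge `(u,v)` and colour `j`. -/
def colAx {V : Type} [DecidableEq V] (G : SimpleGraph V) (k : ℕ) :
    Set (LinIneq (V × Fin k)) :=
  {I | (∃ v : V, I = ⟨fun p => if p.1 = v then -1 else 0, -1⟩) ∨
       (∃ (v : V) (j j' : Fin k), j ≠ j' ∧
          I = ⟨fun p => if p = (v, j) ∨ p = (v, j') then 1 else 0, 1⟩) ∨
       (∃ (u v : V) (j : Fin k), G.Adj u v ∧
          I = ⟨fun p => if p = (u, j) ∨ p = (v, j) then 1 else 0, 1⟩)}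

namespace Stmt16

variable {ν : Type} [DecidableEq ν]

def pos (p : ν) : LinIneq ν := ⟨fun v => if v = p then 1 else 0, 1⟩
def neg (p : ν) : LinIneq ν := ⟨fun v => if v = p then -1 else 0, -1⟩

lemma _root_.CP.cast {S : Set (LinIneq ν)} {I I' : LinIneq ν} {L : ℕ}
    (h : CP S I L) (ha : ∀ v, I.a v = I'.a v) (hb : I.b = I'.b) : CP S I' L := by
  obtain ⟨a, b⟩ := I; obtain ⟨a', b'⟩ := I'
  obtain rfl : a = a' := funext ha
  obtain rfl : b = b' := hb
  exact h

lemma _root_.CP.one_le {S : Set (LinIneq ν)} {I : LinIneq ν} {L : ℕ} (h : CP S I L) : 1 ≤ L := by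
  induction h <;> omega

lemma removal {S : Set (LinIneq ν)} (p : ν) {I : LinIneq ν} {L : ℕ}
    (h : CP (S ∪ {pos p, neg p}) I L) :
    ∃ (m : ℕ) (L' : ℕ), L' ≤ 5 * L ∧
      CP S ⟨fun v => I.a v + (m : ℤ) * (if v = p then 1 else 0), I.b + (m : ℤ)⟩ L' := by
  induction h with
  | hyp I hI =>
    rcases hI with hI | hI
    · exact ⟨0, 1, by omega, (CP.hyp I hI).cast (fun v => by simp) (by simp)⟩
    · rcases hI with rfl | rfl
      · exact ⟨0, 1, by omega, (CP.ax_le p).cast (fun v => by simp [pos]) (by simp [pos])⟩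
      · refine ⟨1, 2, by omega, (CP.mul 0 (CP.ax_ge p)).cast (fun v => ?_) (by simp [neg])⟩
        simp only [neg]
        split <;> simp
  | ax_le v => exact ⟨0, 1, by omega, (CP.ax_le v).cast (fun v => by simp) (by simp)⟩
  | ax_ge v => exact ⟨0, 1, by omega, (CP.ax_ge v).cast (fun v => by simp) (by simp)⟩
  | add h₁ h₂ ih₁ ih₂ =>
    obtain ⟨m₁, L₁', hL₁, hD₁⟩ := ih₁
    obtain ⟨m₂, L₂', hL₂, hD₂⟩ := ih₂
    refine ⟨m₁ + m₂, L₁' + L₂' + 1, by omega,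
      (CP.add hD₁ hD₂).cast (fun v => ?_) (by push_cast; ring)⟩
    simp only
    push_cast; ring
  | mul c h ih =>
    obtain ⟨m, L', hL, hD⟩ := ih
    refine ⟨c * m, L' + 1, by omega,
      (CP.mul c hD).cast (fun v => ?_) (by push_cast; ring)⟩
    simp only
    push_cast; ring
  | div c hc hdvd h ih =>
    rename_i I L
    obtain ⟨m, L', hL, hD⟩ := ih
    obtain ⟨q, s, hm, hs⟩ : ∃ q s, m = c * q + s ∧ s < c :=
      ⟨m / c, m % c, (Nat.div_add_mod m c).symm, Nat.mod_lt m hc⟩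
    -- choose r so that m + r = c * q' is divisible by c
    obtain ⟨r, q', hq', hr, hrc⟩ : ∃ r q', m + r = c * q' ∧ r < c ∧ (r = 0 → s = 0) := by
      rcases Nat.eq_zero_or_pos s with hs0 | hs0
      · exact ⟨0, q, by omega, hc, fun _ => hs0⟩
      · exact ⟨c - s, q + 1, by rw [Nat.mul_add]; omega, by omega, by omega⟩
    -- derive ⟨a + (m+r)·e_p, b + (m+r)⟩
    have hD2 : ∃ L₂, L₂ ≤ L' + 3 ∧
        CP S ⟨fun v => I.a v + ((m + r : ℕ) : ℤ) * (if v = p then 1 else 0),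
              I.b + ((m + r : ℕ) : ℤ)⟩ L₂ := by
      rcases Nat.eq_zero_or_pos r with hr0 | hr0
      · subst hr0
        exact ⟨L', by omega, hD.cast (fun v => by simp) (by simp)⟩
      · refine ⟨L' + 2 + 1, by omega,
          (CP.add hD (CP.mul r (CP.ax_le p))).cast (fun v => ?_) (by push_cast; ring)⟩
        simp only
        split <;> push_cast <;> ring
    obtain ⟨L₂, hL₂, hD2⟩ := hD2
    have hdvd2 : ∀ v, (c : ℤ) ∣ I.a v + ((m + r : ℕ) : ℤ) * (if v = p then 1 else 0) := by
      intro v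
      refine dvd_add (hdvd v) (Dvd.dvd.mul_right ?_ _)
      exact_mod_cast (Dvd.intro q' hq'.symm : c ∣ m + r)
    refine ⟨q', L₂ + 1, by omega, (CP.div c hc hdvd2 hD2).cast (fun v => ?_) ?_⟩
    · simp only
      by_cases hv : v = p
      · subst hv
        have hco : (c : ℤ) ≠ 0 := by exact_mod_cast hc.ne'
        have hmr : ((m + r : ℕ) : ℤ) = (q' : ℤ) * (c : ℤ) := by
          push_cast; rw [mul_comm]; exact_mod_cast hq'
        rw [if_pos rfl, mul_one, hmr,
          Int.add_mul_ediv_right _ _ hco, mul_one]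
      · simp [hv]
    · simp only
      have hcQ : ((c : ℚ)) ≠ 0 := by exact_mod_cast hc.ne'
      have h2 : (m : ℚ) + (r : ℚ) = (c : ℚ) * (q' : ℚ) := by exact_mod_cast hq'
      have h3 : ((I.b + ((m + r : ℕ) : ℤ) : ℤ) : ℚ) / (c : ℚ)
          = (I.b : ℚ) / (c : ℚ) + ((q' : ℤ) : ℚ) := by
        push_cast
        rw [h2, add_div, mul_comm, mul_div_assoc, div_self hcQ, mul_one]
      rw [h3, Int.floor_add_intCast]


lemma finsetSum {S : Set (LinIneq ν)} {α : Type} [DecidableEq α] (s : Finset α)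
    (hs : s.Nonempty) (f : α → LinIneq ν) (B : ℕ)
    (h : ∀ j ∈ s, ∃ L ≤ B, CP S (f j) L) :
    ∃ L ≤ s.card * (B + 1),
      CP S ⟨fun v => ∑ j ∈ s, (f j).a v, ∑ j ∈ s, (f j).b⟩ L := by
  classical
  induction s using Finset.induction_on with
  | empty => exact absurd hs (by simp)
  | insert a s ha ih =>
    rcases s.eq_empty_or_nonempty with rfl | hs'
    · obtain ⟨L, hL, hD⟩ := h a (Finset.mem_insert_self a _)
      refine ⟨L, by simpa using Nat.le_succ_of_le hL,
        hD.cast (fun v => by simp) (by simp)⟩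
    · obtain ⟨L₁, hL₁, hD₁⟩ := h a (Finset.mem_insert_self a _)
      obtain ⟨L₂, hL₂, hD₂⟩ := ih hs' (fun j hj => h j (Finset.mem_insert_of_mem hj))
      refine ⟨L₁ + L₂ + 1, ?_, (CP.add hD₁ hD₂).cast
        (fun v => by simp [Finset.sum_insert ha]) (by simp [Finset.sum_insert ha])⟩
      rw [Finset.card_insert_of_notMem ha]
      have hc1 : 1 ≤ s.card := Finset.Nonempty.card_pos hs'
      nlinarith [hL₁, hL₂]

/-- The assignment axioms for positions `≥ t`. -/
def A {V : Type} [DecidableEq V] {k ℓ : ℕ} (u : Fin ℓ → V) (c : Fin ℓ → Fin k)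
    (t : ℕ) : Set (LinIneq (V × Fin k)) :=
  {I | ∃ i : Fin ℓ, t ≤ (i : ℕ) ∧ (I = pos (u i, c i) ∨ I = neg (u i, c i))}

lemma up {V : Type} [DecidableEq V] (G : SimpleGraph V) {k ℓ L : ℕ}
    (hk : 2 ≤ k) (hL : 1 ≤ L) (u : Fin ℓ → V)
    (H : ∀ c : Fin ℓ → Fin k, ∃ L₀ ≤ L,
      CP (colAx G k ∪ A u c 0) ⟨fun _ => 0, -1⟩ L₀) :
    ∀ t ≤ ℓ, ∀ c : Fin ℓ → Fin k, ∃ L₀ ≤ (9 * k) ^ t * L,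
      CP (colAx G k ∪ A u c t) ⟨fun _ => 0, -1⟩ L₀ := by
  intro t
  induction t with
  | zero => intro _ c; simpa using H c
  | succ t ih =>
    intro ht c
    have htl : t < ℓ := by omega
    set tF : Fin ℓ := ⟨t, htl⟩ with htF
    set w : V := u tF with hw
    set B : ℕ := (9 * k) ^ t * L with hB
    haveI : Nonempty (Fin k) := ⟨⟨0, by omega⟩⟩
    have hB1 : 1 ≤ B := Nat.mul_pos (pow_pos (by omega) t) hL
    set S' : Set (LinIneq (V × Fin k)) := colAx G k ∪ A u c (t + 1) with hS'
    have hset : ∀ j : Fin k,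
        colAx G k ∪ A u (Function.update c tF j) t
          = S' ∪ {pos (w, j), neg (w, j)} := by
      intro j
      ext I
      simp only [Set.mem_union, hS']
      constructor
      · rintro (h | ⟨i, hi, hI⟩)
        · exact Or.inl (Or.inl h)
        · by_cases he : i = tF
          · subst he
            rw [Function.update_self] at hI
            exact Or.inr hI
          · refine Or.inl (Or.inr ⟨i, ?_, ?_⟩)
            · have : (i : ℕ) ≠ t := fun hh => he (Fin.ext hh)
              omega
            · rwa [Function.update_of_ne he] at hI
      · rintro ((h | ⟨i, hi, hI⟩) | h)
        · exact Or.inl h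
        · refine Or.inr ⟨i, by omega, ?_⟩
          have he : i ≠ tF := by rintro rfl; simp only [htF, Fin.val_mk] at hi; omega
          rwa [Function.update_of_ne he]
        · exact Or.inr ⟨tF, le_refl t, by simpa [Function.update_self] using h⟩
    -- for each colour j, either we refute S' directly or derive x_{(w,j)} ≤ 0
    by_cases hex : ∃ L', L' ≤ 5 * B ∧ CP S' ⟨fun _ => 0, -1⟩ L'
    · obtain ⟨L', hL', hD⟩ := hex
      refine ⟨L', ?_, hD⟩
      calc L' ≤ 5 * B := hL'
        _ ≤ 9 * k * B := by nlinarith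
        _ = (9 * k) ^ (t + 1) * L := by rw [pow_succ]; ring
    · have key : ∀ j : Fin k, ∃ L' ≤ 5 * B + 1,
          CP S' ⟨fun v => if v = (w, j) then 1 else 0, 0⟩ L' := by
        intro j
        obtain ⟨L₀, hL₀, hD⟩ := ih (by omega) (Function.update c tF j)
        rw [hset j] at hD
        obtain ⟨m, L', hL', hD'⟩ := removal (w, j) hD
        rcases Nat.eq_zero_or_pos m with hm | hm
        · exact absurd ⟨L', by omega, hD'.cast (fun v => by simp [hm]) (by simp [hm])⟩ hex
        · have hdvd : ∀ v : V × Fin k,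
              (m : ℤ) ∣ ((⟨fun _ => 0, -1⟩ : LinIneq (V × Fin k)).a v
                + (m : ℤ) * (if v = (w, j) then 1 else 0)) := fun v =>
            dvd_add (dvd_zero _) (Dvd.dvd.mul_right dvd_rfl _)
          refine ⟨L' + 1, by omega, (CP.div m hm hdvd hD').cast (fun v => ?_) ?_⟩
          · simp only
            by_cases hv : v = (w, j)
            · simp [hv, Int.ediv_self (by exact_mod_cast hm.ne' : (m : ℤ) ≠ 0)]
            · simp [hv]
          · simp only
            rw [Int.floor_eq_zero_iff]
            have hm1 : (1 : ℚ) ≤ (m : ℚ) := by exact_mod_cast hm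
            have hmpos : (0 : ℚ) < (m : ℚ) := by linarith
            constructor
            · push_cast
              apply div_nonneg (by linarith) (by linarith)
            · push_cast
              rw [div_lt_one hmpos]
              linarith
      choose Lf hLf hDf using key
      obtain ⟨Lsum, hLsum, hDsum⟩ := finsetSum (Finset.univ : Finset (Fin k))
        (Finset.univ_nonempty) (fun j => ⟨fun v => if v = (w, j) then 1 else 0, 0⟩)
        (5 * B + 1) (fun j _ => ⟨Lf j, hLf j, hDf j⟩)
      have hax : (⟨fun p => if p.1 = w then -1 else 0, -1⟩ : LinIneq (V × Fin k)) ∈ S' :=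
        Or.inl (Or.inl ⟨w, rfl⟩)
      have hsum : ∀ v : V × Fin k,
          (∑ j : Fin k, (if v = (w, j) then (1 : ℤ) else 0)) = if v.1 = w then 1 else 0 := by
        rintro ⟨v1, v2⟩
        by_cases h1 : v1 = w
        · subst h1
          simp [Prod.ext_iff, Finset.sum_ite_eq]
        · simp [Prod.ext_iff, h1]
      refine ⟨1 + Lsum + 1, ?_, (CP.add (CP.hyp _ hax) hDsum).cast (fun v => ?_) (by simp)⟩
      · have : Lsum ≤ k * (5 * B + 2) := by
          calc Lsum ≤ (Finset.univ : Finset (Fin k)).card * (5 * B + 1 + 1) := hLsum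
            _ = k * (5 * B + 2) := by simp [Nat.add_assoc]
        calc 1 + Lsum + 1 ≤ k * (5 * B + 2) + 2 := by omega
          _ ≤ 9 * k * B := by nlinarith
          _ = (9 * k) ^ (t + 1) * L := by rw [pow_succ]; ring
      · simp only [hsum v]
        by_cases h1 : v.1 = w <;> simp [h1]


end Stmt16

open Stmt16 in
theorem stmt_16 :
    ∃ C : ℕ, ∀ (V : Type) (_ : DecidableEq V) (G : SimpleGraph V)
      (k ℓ L : ℕ), 2 ≤ k → ∀ u : Fin ℓ → V,
      (∀ c : Fin ℓ → Fin k, ∃ L₀, L₀ ≤ L ∧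
        CP (colAx G k ∪ {I | ∃ t : Fin ℓ,
              I = ⟨fun p => if p = (u t, c t) then 1 else 0, 1⟩ ∨
              I = ⟨fun p => if p = (u t, c t) then -1 else 0, -1⟩})
          ⟨fun _ => 0, -1⟩ L₀) →
      ∃ L', L' ≤ k ^ (C * (ℓ + 1)) * L ∧
        CP (colAx G k) ⟨fun _ => 0, -1⟩ L' := by
  refine ⟨5, fun V _ G k ℓ L hk u H => ?_⟩
  haveI : NeZero k := ⟨by omega⟩
  have hA0 : ∀ c : Fin ℓ → Fin k,
      colAx G k ∪ {I | ∃ t : Fin ℓ,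
          I = ⟨fun p => if p = (u t, c t) then 1 else 0, 1⟩ ∨
          I = ⟨fun p => if p = (u t, c t) then -1 else 0, -1⟩}
        = colAx G k ∪ A u c 0 := by
    intro c
    congr 1
    ext I
    simp [A, pos, neg]
  have H' : ∀ c : Fin ℓ → Fin k, ∃ L₀ ≤ L,
      CP (colAx G k ∪ A u c 0) ⟨fun _ => 0, -1⟩ L₀ := by
    intro c
    obtain ⟨L₀, hL₀, hD⟩ := H c
    rw [hA0 c] at hD
    exact ⟨L₀, hL₀, hD⟩
  have hL : 1 ≤ L := by
    obtain ⟨L₀, hL₀, hD⟩ := H' (fun _ => 0)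
    exact le_trans hD.one_le hL₀
  obtain ⟨L₀, hL₀, hD⟩ := up G hk hL u H' ℓ le_rfl (fun _ => 0)
  have hAℓ : colAx G k ∪ A u (fun _ => 0) ℓ = colAx G k := by
    rw [Set.union_eq_left]
    rintro I ⟨i, hi, -⟩
    exact absurd i.isLt (by omega)
  rw [hAℓ] at hD
  refine ⟨L₀, ?_, hD⟩
  calc L₀ ≤ (9 * k) ^ ℓ * L := hL₀
    _ ≤ (k ^ 5) ^ ℓ * L := by
        gcongr
        have h16 : 2 ^ 4 ≤ k ^ 4 := Nat.pow_le_pow_left hk 4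
        calc 9 * k ≤ 16 * k := by omega
          _ = 2 ^ 4 * k := by norm_num
          _ ≤ k ^ 4 * k := Nat.mul_le_mul_right _ h16
          _ = k ^ 5 := by ring
    _ ≤ k ^ (5 * (ℓ + 1)) * L := by
        have h2 : (k ^ 5) ^ ℓ ≤ k ^ (5 * (ℓ + 1)) := by
          rw [← pow_mul]
          exact Nat.pow_le_pow_right (by omega) (by omega)
        exact Nat.mul_le_mul_right _ h2
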